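/- Let u, v ∈ ℝ with u + v ≠ 0, and let q = diag(q_1,…,q_n) be a real diagonal matrix with q_1 ≥ ⋯ ≥ q_n ≥ 0. Suppose Ω = (sinh q)·α + e^v·cosh q for some n×n complex matrix α, and that ΩΩ† = e^{-2u}·1_n + e^{-2v}·(sinh q)². Then q_n > 0, and consequently sinh q is invertible. -/

import Mathlib

open Matrix

/-- under the momentum constraint, u + v ≠ 0 forces q_n > 0,
so sinh q is invertible. -/
theorem stmt12 (n : ℕ) (hn : 0 < n) (u v : ℝ) (huv : u + v ≠ 0)
    (lst : Fin n) (hlst : (lst : ℕ) = n - 1)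
    (q : Fin n → ℝ)
    (hord : ∀ i j : Fin n, i ≤ j → q j ≤ q i)
    (hpos : ∀ i : Fin n, 0 ≤ q i)
    (α Ω : Matrix (Fin n) (Fin n) ℂ)
    (hΩ : Ω = (diagonal fun i => (Real.sinh (q i) : ℂ)) * α
      + (Real.exp v : ℂ) • diagonal fun i => (Real.cosh (q i) : ℂ))
    (hcon : Ω * Ωᴴ = (Real.exp (-2*u) : ℂ) • (1 : Matrix (Fin n) (Fin n) ℂ)
      + (Real.exp (-2*v) : ℂ) • (diagonal fun i => (Real.sinh (q i) : ℂ)) ^ 2) :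
    0 < q lst ∧ ∀ i : Fin n, Real.sinh (q i) ≠ 0 := by
  have hq : 0 < q lst := by
    rcases (hpos lst).lt_or_eq with h | h
    · exact h
    exfalso
    have h0 : q lst = 0 := h.symm
    have hrow : ∀ k, Ω lst k = if lst = k then (Real.exp v : ℂ) else 0 := by
      intro k
      rw [hΩ]
      simp [Matrix.add_apply, Matrix.mul_apply, diagonal_apply, h0]
    have hent := congrFun (congrFun hcon lst) lst
    rw [Matrix.mul_apply] at hent
    simp only [Matrix.conjTranspose_apply, hrow] at hent
    simp [Finset.sum_ite_eq, h0, Matrix.one_apply, diagonal_apply, pow_two,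
      Matrix.mul_apply] at hent
    norm_cast at hent
    rw [Complex.conj_ofReal] at hent
    have : Real.exp v * Real.exp v = Real.exp (-(2*u)) := by
      rw [show Complex.exp (-(2 * (u:ℂ))) = ((Real.exp (-(2*u)) : ℝ) : ℂ) by
        rw [Complex.ofReal_exp, Complex.ofReal_neg, Complex.ofReal_mul, Complex.ofReal_ofNat]] at hent
      exact_mod_cast hent
    rw [← Real.exp_add] at this
    have := Real.exp_injective this
    apply huv
    linarith
  refine ⟨hq, fun i => ?_⟩
  have hle : i ≤ lst := by
    rw [Fin.le_def, hlst]
    omega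
  have : 0 < q i := lt_of_lt_of_le hq (hord i lst hle)
  exact ne_of_gt (Real.sinh_pos_iff.2 this)
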